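/- arXiv:1601.06215 — 2 statements merged into one kernel-verified Lean document; each statement's English description precedes it below -/
import Mathlib

section
/- If I ⊆ M_m is a decreasing set of monomials, then the complement M_m \ Ǐ of the set of multiplicative complements of elements of I is also a decreasing set. -/
/-- The partial order `⪯` on square-free monomials (identified with their sets of
variable indices). -/
def preceq {m : ℕ} (S T : Finset (Fin m)) : Prop :=
  ∃ T' ⊆ T, T'.card = S.card ∧
    List.Forall₂ (· ≤ ·) (S.sort (· ≤ ·)) (T'.sort (· ≤ ·))

/-- A set of monomials is decreasing when it is downward closed for `⪯`. -/
def Decreasing {m : ℕ} (I : Finset (Finset (Fin m))) : Prop :=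
  ∀ f ∈ I, ∀ g, preceq g f → g ∈ I

/-- counting function -/
def cnt {m : ℕ} (S : Finset (Fin m)) (t : Fin m) : ℕ :=
  (S.filter (fun x => t ≤ x)).card

lemma forall₂_countP {m : ℕ} (t : Fin m) :
    ∀ {l₁ l₂ : List (Fin m)}, List.Forall₂ (· ≤ ·) l₁ l₂ →
      l₁.countP (fun x => t ≤ x) ≤ l₂.countP (fun x => t ≤ x) := by
  intro l₁ l₂ h
  induction h with
  | nil => simp
  | cons hab _ ih =>
    simp only [List.countP_cons]
    rcases Decidable.em (t ≤ _) with h1 | h1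
    · have : t ≤ _ := le_trans h1 hab
      simp [h1, this]; omega
    · simp [h1]; omega

lemma cnt_sort {m : ℕ} (S : Finset (Fin m)) (t : Fin m) :
    cnt S t = (S.sort (· ≤ ·)).countP (fun x => t ≤ x) := by
  have h1 : cnt S t = Multiset.countP (fun x => t ≤ x) S.val := by
    rw [cnt, Multiset.countP_eq_card_filter]; rfl
  rw [h1, ← Finset.sort_eq (s := S) (r := (· ≤ ·)), Multiset.coe_countP]

lemma preceq_cnt {m : ℕ} {S T : Finset (Fin m)} (h : preceq S T) (t : Fin m) :
    cnt S t ≤ cnt T t := by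
  obtain ⟨T', hT'sub, hcard, hf⟩ := h
  calc cnt S t ≤ cnt T' t := by
        rw [cnt_sort, cnt_sort]; exact forall₂_countP t hf
    _ ≤ cnt T t := Finset.card_le_card (Finset.filter_subset_filter _ hT'sub)

lemma forall₂_mem_right {m : ℕ} {l₁ l₂ : List (Fin m)}
    (h : List.Forall₂ (· ≤ ·) l₁ l₂) {b : Fin m} (hb : b ∈ l₂) :
    ∃ a ∈ l₁, a ≤ b := by
  induction h with
  | nil => simp at hb
  | cons hab htl ih =>
    rcases List.mem_cons.mp hb with rfl | hb
    · exact ⟨_, List.mem_cons_self, hab⟩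
    · obtain ⟨a, ha, hab'⟩ := ih hb
      exact ⟨a, List.mem_cons_of_mem _ ha, hab'⟩

lemma cnt_preceq {m : ℕ} : ∀ (n : ℕ) (S T : Finset (Fin m)), S.card = n →
    (∀ t, cnt S t ≤ cnt T t) → preceq S T := by
  intro n
  induction n with
  | zero =>
    intro S T hn _
    rw [Finset.card_eq_zero] at hn
    subst hn
    exact ⟨∅, Finset.empty_subset _, by simp, by simp⟩
  | succ n ih =>
    intro S T hn hc
    have hS : S.Nonempty := by
      rw [← Finset.card_pos, hn]; omega
    set s := S.min' hS with hs
    have hsS : s ∈ S := S.min'_mem hS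
    -- T has an element ≥ s
    have hTf : (T.filter (fun x => s ≤ x)).Nonempty := by
      rw [← Finset.card_pos]
      have h1 : 0 < cnt S s := Finset.card_pos.mpr ⟨s, Finset.mem_filter.mpr ⟨hsS, le_refl s⟩⟩
      exact lt_of_lt_of_le h1 (hc s)
    set u := (T.filter (fun x => s ≤ x)).min' hTf with hu
    have huT : u ∈ T := (Finset.mem_filter.mp ((T.filter _).min'_mem hTf)).1
    have hsu : s ≤ u := (Finset.mem_filter.mp ((T.filter _).min'_mem hTf)).2
    have humin : ∀ x ∈ T, s ≤ x → u ≤ x := fun x hx hsx =>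
      Finset.min'_le _ x (Finset.mem_filter.mpr ⟨hx, hsx⟩)
    -- counting for the erased sets
    have herase : ∀ (A : Finset (Fin m)) (a : Fin m) (t : Fin m), a ∈ A →
        cnt (A.erase a) t = cnt A t - (if t ≤ a then 1 else 0) := by
      intro A a t ha
      unfold cnt
      rw [Finset.filter_erase]
      split
      · rw [Finset.card_erase_of_mem (Finset.mem_filter.mpr ⟨ha, by assumption⟩)]
      · rw [Finset.erase_eq_of_notMem (fun hmem => (by assumption : ¬ t ≤ a)
          (Finset.mem_filter.mp hmem).2), Nat.sub_zero]
    have hc2 : ∀ t, cnt (S.erase s) t ≤ cnt (T.erase u) t := by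
      intro t
      rw [herase S s t hsS, herase T u t huT]
      by_cases hts : t ≤ s
      · have htu : t ≤ u := le_trans hts hsu
        simp only [hts, htu, if_true]
        exact Nat.sub_le_sub_right (hc t) 1
      · by_cases htu : t ≤ u
        · have hst : s < t := lt_of_not_ge hts
          have h1 : cnt S t < cnt S s := by
            apply Finset.card_lt_card
            have hsub : S.filter (fun x => t ≤ x) ⊆ S.filter (fun x => s ≤ x) := by
              intro x hx
              rw [Finset.mem_filter] at hx ⊢
              exact ⟨hx.1, le_trans (le_of_lt hst) hx.2⟩
            refine (Finset.ssubset_iff_of_subset hsub).mpr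
              ⟨s, Finset.mem_filter.mpr ⟨hsS, le_refl s⟩, fun hmem => hts (Finset.mem_filter.mp hmem).2⟩
          have h2 : cnt T s = cnt T t := by
            unfold cnt
            apply congrArg
            apply Finset.filter_congr
            intro x hx
            constructor
            · intro hsx
              exact le_trans htu (humin x hx hsx)
            · intro htx
              exact le_trans (le_of_lt hst) htx
          have h3 := hc s
          simp only [hts, htu, if_true, if_false]
          omega
        · simp only [hts, htu, if_false, Nat.sub_zero]
          exact hc t
    have hcard2 : (S.erase s).card = n := by
      rw [Finset.card_erase_of_mem hsS, hn]
      omega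
    obtain ⟨T'', hsub'', hcard'', hf''⟩ := ih (S.erase s) (T.erase u) hcard2 hc2
    have huT'' : u ∉ T'' := fun h => (Finset.mem_erase.mp (hsub'' h)).1 rfl
    have hub : ∀ b ∈ T'', u ≤ b := by
      intro b hb
      obtain ⟨a, ha, hab⟩ := forall₂_mem_right hf'' ((Finset.mem_sort _).mpr hb)
      have haS : a ∈ S := Finset.mem_of_mem_erase ((Finset.mem_sort _).mp ha)
      exact humin b (Finset.mem_of_mem_erase (hsub'' hb)) (le_trans (S.min'_le a haS) hab)
    refine ⟨insert u T'', ?_, ?_, ?_⟩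
    · intro x hx
      rcases Finset.mem_insert.mp hx with rfl | hx
      · exact huT
      · exact Finset.mem_of_mem_erase (hsub'' hx)
    · rw [Finset.card_insert_of_notMem huT'', hcard'', hcard2, hn]
    · have hS_sort : S.sort (· ≤ ·) = s :: (S.erase s).sort (· ≤ ·) := by
        conv_lhs => rw [← Finset.insert_erase hsS]
        exact Finset.sort_insert _ (fun b hb => S.min'_le b (Finset.mem_of_mem_erase hb))
          (Finset.notMem_erase s S)
      have hT_sort : (insert u T'').sort (· ≤ ·) = u :: T''.sort (· ≤ ·) :=
        Finset.sort_insert _ hub huT''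
      rw [hS_sort, hT_sort]
      exact List.Forall₂.cons hsu hf''

lemma cnt_compl {m : ℕ} (S : Finset (Fin m)) (t : Fin m) :
    cnt S t + cnt Sᶜ t = cnt (Finset.univ : Finset (Fin m)) t := by
  unfold cnt
  rw [← Finset.card_union_of_disjoint, ← Finset.filter_union, Finset.union_compl]
  exact Finset.disjoint_filter_filter (disjoint_compl_right)

/-- if `I` is decreasing then `M_m \ Ǐ` is decreasing, where
`Ǐ` is the set of multiplicative complements of elements of `I`. -/
theorem compl_decreasing {m : ℕ} (I : Finset (Finset (Fin m)))
    (hI : Decreasing I) :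
    Decreasing (Finset.univ \ I.image (fun f => fᶜ)) := by
  intro f hf g hg
  rw [Finset.mem_sdiff] at hf ⊢
  refine ⟨Finset.mem_univ g, fun hmem => ?_⟩
  obtain ⟨h, hh, hhg⟩ := Finset.mem_image.mp hmem
  have hgc : gᶜ ∈ I := by rw [← hhg, compl_compl]; exact hh
  have hcc : preceq fᶜ gᶜ := by
    apply cnt_preceq (fᶜ.card) _ _ rfl
    intro t
    have h1 := cnt_compl f t
    have h2 := cnt_compl g t
    have h3 := preceq_cnt hg t
    omega
  have : fᶜ ∈ I := hI gᶜ hgc fᶜ hcc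
  exact hf.2 (Finset.mem_image.mpr ⟨fᶜ, this, compl_compl f⟩)
end

section
/- For any square-free monomial g in m variables, the map (A,b) ↦ (A,b)·g from LTA(m,2)_g to the orbit of g under LTA(m,2) is a bijection; hence |LTA(m,2)·g| = |LTA(m,2)_g|. -/
open MvPolynomial

/-- The ring `R_m = F_2[x_0,…,x_{m-1}]/(x_i^2 - x_i)`. -/
def Rring (m : ℕ) : Type :=
  MvPolynomial (Fin m) (ZMod 2) ⧸
    Ideal.span { P : MvPolynomial (Fin m) (ZMod 2) | ∃ i, P = X i ^ 2 - X i }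

noncomputable instance (m : ℕ) : CommRing (Rring m) := Ideal.Quotient.commRing _
noncomputable instance (m : ℕ) : Algebra (ZMod 2) (Rring m) := Ideal.Quotient.algebra _

/-- The class in `R_m` of a polynomial. -/
noncomputable def rmk {m : ℕ} (P : MvPolynomial (Fin m) (ZMod 2)) : Rring m :=
  Ideal.Quotient.mk _ P

/-- `A` is lower unitriangular. -/
def LowerUni {m : ℕ} (A : Matrix (Fin m) (Fin m) (ZMod 2)) : Prop :=
  (∀ i, A i i = 1) ∧ (∀ i j : Fin m, i < j → A i j = 0)

/-- Image of the variable `x_i` under the affine substitution `(A,b)`: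
`∑_j a_{ij} x_j + b_i` (which is `x_i + ∑_{j<i} a_{ij} x_j + b_i` when `A` is
lower unitriangular). -/
noncomputable def subVar {m : ℕ} (A : Matrix (Fin m) (Fin m) (ZMod 2))
    (b : Fin m → ZMod 2) (i : Fin m) : MvPolynomial (Fin m) (ZMod 2) :=
  (∑ j, C (A i j) * X j) + C (b i)

/-- The orbit in `R_m` of the monomial `g` under the action of `LTA(m,2)` by
substitution. -/
noncomputable def orbitLTA {m : ℕ} (g : Finset (Fin m)) : Set (Rring m) :=
  { P | ∃ A b, LowerUni A ∧ P = rmk (∏ i ∈ g, subVar A b i) }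

/-- Membership in the subgroup `LTA(m,2)_g`: `b_i = 0` for `i ∉ ind(g)` and
`a_{ij} = 0` (off the diagonal) whenever `i ∉ ind(g)` or `j ∈ ind(g)`. -/
def stabCond {m : ℕ} (g : Finset (Fin m)) (A : Matrix (Fin m) (Fin m) (ZMod 2))
    (b : Fin m → ZMod 2) : Prop :=
  (∀ i, i ∉ g → b i = 0) ∧
  (∀ i j : Fin m, i ≠ j → (i ∉ g ∨ j ∈ g) → A i j = 0)

section Work
variable {m : ℕ}

noncomputable def Ig (m : ℕ) : Ideal (MvPolynomial (Fin m) (ZMod 2)) :=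
  Ideal.span { P : MvPolynomial (Fin m) (ZMod 2) | ∃ i, P = X i ^ 2 - X i }

lemma supp_add (α β : Fin m →₀ ℕ) : (α + β).support = α.support ∪ β.support := by
  ext k
  simp [Finsupp.mem_support_iff, Nat.add_eq_zero]
  tauto

lemma zmod2_sq (a : ZMod 2) : a ^ 2 = a := by revert a; decide

lemma rmk_eq_iff {P Q : MvPolynomial (Fin m) (ZMod 2)} : rmk P = rmk Q ↔ P - Q ∈ Ig m :=
  Ideal.Quotient.eq

lemma affine_sq (c : Fin m → ZMod 2) (d : ZMod 2) :
    ((∑ j, C (c j) * X j) + C d) ^ 2 - ((∑ j, C (c j) * X j) + C d) ∈ Ig m := by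
  have h2 : ((∑ j, C (c j) * X j) + C d : MvPolynomial (Fin m) (ZMod 2)) ^ 2
      = (∑ j, (C (c j) * X j) ^ 2) + (C d) ^ 2 := by
    rw [add_pow_char, sum_pow_char]
  have h3 : ∀ j : Fin m, (C (c j) * X j : MvPolynomial (Fin m) (ZMod 2)) ^ 2
      = C (c j) * X j ^ 2 := by
    intro j; rw [mul_pow, ← C_pow, zmod2_sq]
  have h4 : ((∑ j, C (c j) * X j) + C d) ^ 2 - ((∑ j, C (c j) * X j) + C d)
      = ∑ j : Fin m, C (c j) * (X j ^ 2 - X j) := by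
    rw [h2]
    simp_rw [h3, ← C_pow, zmod2_sq, mul_sub]
    rw [Finset.sum_sub_distrib]
    ring
  rw [h4]
  exact Ideal.sum_mem _ fun j _ => Ideal.mul_mem_left _ _ (Ideal.subset_span ⟨j, rfl⟩)

lemma subVar_idem (A : Matrix (Fin m) (Fin m) (ZMod 2)) (b : Fin m → ZMod 2) (i : Fin m) :
    rmk (subVar A b i * subVar A b i) = rmk (subVar A b i) := by
  rw [rmk_eq_iff, ← sq]
  exact affine_sq (A i) (b i)

end Work
section Work2
variable {m : ℕ}

lemma rmk_mul (P Q : MvPolynomial (Fin m) (ZMod 2)) : rmk (P * Q) = rmk P * rmk Q := rfl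
lemma rmk_add (P Q : MvPolynomial (Fin m) (ZMod 2)) : rmk (P + Q) = rmk P + rmk Q := rfl
lemma rmk_sub (P Q : MvPolynomial (Fin m) (ZMod 2)) : rmk (P - Q) = rmk P - rmk Q :=
  map_sub (Ideal.Quotient.mk (Ig m)) P Q
lemma rmk_one : rmk (1 : MvPolynomial (Fin m) (ZMod 2)) = 1 := rfl

lemma rmk_prod {ι : Type*} (s : Finset ι) (f : ι → MvPolynomial (Fin m) (ZMod 2)) :
    rmk (∏ i ∈ s, f i) = ∏ i ∈ s, rmk (f i) :=
  map_prod (Ideal.Quotient.mk (Ig m)) f s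

lemma exchange (g : Finset (Fin m)) (f : Fin m → MvPolynomial (Fin m) (ZMod 2))
    {i j : Fin m} (hi : i ∈ g) (hj : j ∈ g) (hij : i ≠ j)
    (hidem : rmk (f j * f j) = rmk (f j)) :
    rmk (∏ k ∈ g, Function.update f i (f i + (f j - 1)) k) = rmk (∏ k ∈ g, f k) := by
  rw [rmk_prod, rmk_prod]
  have hje : j ∈ g.erase i := Finset.mem_erase.mpr ⟨hij.symm, hj⟩
  rw [← Finset.mul_prod_erase g _ hi, ← Finset.mul_prod_erase (g.erase i) _ hje,
      ← Finset.mul_prod_erase g (fun k => rmk (f k)) hi,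
      ← Finset.mul_prod_erase (g.erase i) (fun k => rmk (f k)) hje]
  have hprod : ∀ k ∈ (g.erase i).erase j,
      rmk (Function.update f i (f i + (f j - 1)) k) = rmk (f k) := by
    intro k hk
    have : k ≠ i := (Finset.mem_erase.mp (Finset.mem_erase.mp hk).2).1
    rw [Function.update_of_ne this]
  rw [Finset.prod_congr rfl hprod, Function.update_self, Function.update_of_ne hij.symm]
  have hj2 : rmk (f j) * rmk (f j) = rmk (f j) := by rw [← rmk_mul]; exact hidem
  have key : rmk (f i + (f j - 1)) * rmk (f j) = rmk (f i) * rmk (f j) := by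
    rw [rmk_add, rmk_sub, rmk_one]
    linear_combination hj2
  rw [← mul_assoc, ← mul_assoc, key]
end Work2
section Work3
variable {m : ℕ}

lemma sum_range_two_pow (n : ℕ) : ∑ k ∈ Finset.range n, 2 ^ k = 2 ^ n - 1 := by
  induction n with
  | zero => simp
  | succ n ih => rw [Finset.sum_range_succ, ih]; have := Nat.one_le_two_pow (n := n); omega

lemma pow_sum_lt (F : Finset (Fin m)) (n : ℕ) (h : ∀ j ∈ F, (j : ℕ) < n) :
    ∑ j ∈ F, 2 ^ (j : ℕ) < 2 ^ n := by
  have hinj : Set.InjOn (fun j : Fin m => (j : ℕ)) F := fun a _ b _ hab => Fin.val_injective hab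
  rw [← Finset.sum_image (f := fun k => 2 ^ k) (g := fun j : Fin m => (j : ℕ))
    (fun a ha b hb hab => hinj ha hb hab)]
  have hsub : F.image (fun j : Fin m => (j : ℕ)) ⊆ Finset.range n := by
    intro k hk
    obtain ⟨j, hj, rfl⟩ := Finset.mem_image.mp hk
    exact Finset.mem_range.mpr (h j hj)
  calc ∑ k ∈ F.image (fun j : Fin m => (j : ℕ)), 2 ^ k
      ≤ ∑ k ∈ Finset.range n, 2 ^ k := Finset.sum_le_sum_of_subset hsub
    _ = 2 ^ n - 1 := sum_range_two_pow n
    _ < 2 ^ n := by have := Nat.one_le_two_pow (n := n); omega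

noncomputable def Nmes (g : Finset (Fin m)) (A : Matrix (Fin m) (Fin m) (ZMod 2)) : ℕ :=
  ∑ i ∈ g, ∑ j ∈ g.erase i, (if A i j = 0 then 0 else 2 ^ (j : ℕ))

lemma zmod2_ne_zero {x : ZMod 2} (h : x ≠ 0) : x = 1 := by revert h; revert x; decide

lemma reduce (g : Finset (Fin m)) :
    ∀ n (A : Matrix (Fin m) (Fin m) (ZMod 2)) (b : Fin m → ZMod 2), Nmes g A = n → LowerUni A →
    ∃ A' b', LowerUni A' ∧ (∀ i ∈ g, ∀ j ∈ g, i ≠ j → A' i j = 0) ∧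
      rmk (∏ i ∈ g, subVar A' b' i) = rmk (∏ i ∈ g, subVar A b i) := by
  intro n
  induction n using Nat.strong_induction_on with
  | _ n ih =>
    intro A b hN hLU
    by_cases hdone : ∀ i ∈ g, ∀ j ∈ g, i ≠ j → A i j = 0
    · exact ⟨A, b, hLU, hdone, rfl⟩
    · push_neg at hdone
      obtain ⟨i, hi, j, hj, hij, hAij⟩ := hdone
      have hji : j < i := by
        rcases lt_trichotomy i j with h | h | h
        · exact absurd (hLU.2 i j h) hAij
        · exact absurd h hij
        · exact h
      have hAij1 : A i j = 1 := zmod2_ne_zero hAij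
      set A1 : Matrix (Fin m) (Fin m) (ZMod 2) := A.updateRow i (A i + A j) with hA1
      set b1 : Fin m → ZMod 2 := Function.update b i (b i + (b j - 1)) with hb1
      have hA1i : ∀ k, A1 i k = A i k + A j k := by
        intro k; rw [hA1, Matrix.updateRow_self]; rfl
      have hA1ne : ∀ i', i' ≠ i → ∀ k, A1 i' k = A i' k := by
        intro i' hi' k; rw [hA1, Matrix.updateRow_ne hi']
      have hLU1 : LowerUni A1 := by
        constructor
        · intro k
          by_cases hk : k = i
          · subst hk; rw [hA1i, hLU.1, hLU.2 j k hji]; ring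
          · rw [hA1ne k hk]; exact hLU.1 k
        · intro k l hkl
          by_cases hk : k = i
          · subst hk; rw [hA1i, hLU.2 k l hkl, hLU.2 j l (hji.trans hkl)]; ring
          · rw [hA1ne k hk]; exact hLU.2 k l hkl
      have hsub : ∀ k, subVar A1 b1 k
          = Function.update (fun k => subVar A b k) i (subVar A b i + (subVar A b j - 1)) k := by
        intro k
        by_cases hk : k = i
        · subst hk
          rw [Function.update_self]
          simp only [subVar, hA1i, hb1, Function.update_self, C_add, C_sub, C_1, add_mul,
            Finset.sum_add_distrib]
          ring
        · rw [Function.update_of_ne hk]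
          simp only [subVar, hA1ne k hk, hb1, Function.update_of_ne hk]
      have hprodeq : rmk (∏ k ∈ g, subVar A1 b1 k) = rmk (∏ k ∈ g, subVar A b k) := by
        rw [Finset.prod_congr rfl fun k _ => hsub k]
        exact exchange g _ hi hj hij (subVar_idem A b j)
      -- measure decrease
      have hmes : Nmes g A1 < n := by
        subst hN
        have hjei : j ∈ g.erase i := Finset.mem_erase.mpr ⟨fun h => hij h.symm, hj⟩
        have hrow : ∀ i' ∈ g.erase i,
            (∑ j' ∈ g.erase i', if A1 i' j' = 0 then 0 else 2 ^ (j' : ℕ))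
            = ∑ j' ∈ g.erase i', if A i' j' = 0 then 0 else 2 ^ (j' : ℕ) := by
          intro i' hi'
          exact Finset.sum_congr rfl fun j' _ => by
            rw [hA1ne i' (Finset.mem_erase.mp hi').1]
        rw [Nmes, Nmes, ← Finset.add_sum_erase g _ hi, ← Finset.add_sum_erase g _ hi,
          Finset.sum_congr rfl hrow]
        have hkey : (∑ j' ∈ g.erase i, if A1 i j' = 0 then 0 else 2 ^ (j' : ℕ))
            < ∑ j' ∈ g.erase i, if A i j' = 0 then 0 else 2 ^ (j' : ℕ) := by
          rw [← Finset.add_sum_erase _ _ hjei, ← Finset.add_sum_erase _ _ hjei]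
          have hA1ij : A1 i j = 0 := by rw [hA1i, hAij1, hLU.1 j]; decide
          rw [hA1ij, if_pos rfl, if_neg hAij]
          set E := (g.erase i).erase j with hE
          have hsplit1 : (∑ j' ∈ E, if A1 i j' = 0 then 0 else 2 ^ (j' : ℕ))
              = (∑ j' ∈ E.filter (· < j), if A1 i j' = 0 then 0 else 2 ^ (j' : ℕ))
              + ∑ j' ∈ E.filter (¬ · < j), if A1 i j' = 0 then 0 else 2 ^ (j' : ℕ) :=
            (Finset.sum_filter_add_sum_filter_not E _ _).symm
          have hsplit2 : (∑ j' ∈ E, if A i j' = 0 then 0 else 2 ^ (j' : ℕ))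
              = (∑ j' ∈ E.filter (· < j), if A i j' = 0 then 0 else 2 ^ (j' : ℕ))
              + ∑ j' ∈ E.filter (¬ · < j), if A i j' = 0 then 0 else 2 ^ (j' : ℕ) :=
            (Finset.sum_filter_add_sum_filter_not E _ _).symm
          have heq2 : (∑ j' ∈ E.filter (¬ · < j), if A1 i j' = 0 then 0 else 2 ^ (j' : ℕ))
              = ∑ j' ∈ E.filter (¬ · < j), if A i j' = 0 then 0 else 2 ^ (j' : ℕ) := by
            refine Finset.sum_congr rfl fun j' hj' => ?_
            obtain ⟨hj'E, hj'j⟩ := Finset.mem_filter.mp hj'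
            have hjj' : j < j' := by
              rcases lt_trichotomy j j' with h | h | h
              · exact h
              · exact absurd h.symm (Finset.mem_erase.mp hj'E).1
              · exact absurd h hj'j
            rw [hA1i, hLU.2 j j' hjj', add_zero]
          have hlt1 : (∑ j' ∈ E.filter (· < j), if A1 i j' = 0 then 0 else 2 ^ (j' : ℕ))
              < 2 ^ (j : ℕ) := by
            have hle : (∑ j' ∈ E.filter (· < j), if A1 i j' = 0 then 0 else 2 ^ (j' : ℕ))
                ≤ ∑ j' ∈ E.filter (· < j), 2 ^ (j' : ℕ) := by
              refine Finset.sum_le_sum fun j' _ => ?_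
              split
              · exact Nat.zero_le _
              · exact le_refl _
            exact lt_of_le_of_lt hle (pow_sum_lt _ _ fun j' hj' =>
              Fin.lt_def.mp (Finset.mem_filter.mp hj').2)
          omega
        omega
      obtain ⟨A', b', hLU', hz', heq'⟩ := ih (Nmes g A1) hmes A1 b1 rfl hLU1
      exact ⟨A', b', hLU', hz', heq'.trans hprodeq⟩

end Work3
section Work4
variable {m : ℕ}

lemma surj_core (g : Finset (Fin m)) (A : Matrix (Fin m) (Fin m) (ZMod 2))
    (b : Fin m → ZMod 2) (hLU : LowerUni A) :
    ∃ A' b', LowerUni A' ∧ stabCond g A' b' ∧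
      rmk (∏ i ∈ g, subVar A' b' i) = rmk (∏ i ∈ g, subVar A b i) := by
  obtain ⟨A2, b2, hLU2, hz2, heq2⟩ := reduce g (Nmes g A) A b rfl hLU
  refine ⟨fun i j => if i ∈ g then A2 i j else (if i = j then 1 else 0),
    fun i => if i ∈ g then b2 i else 0, ⟨?_, ?_⟩, ⟨?_, ?_⟩, ?_⟩
  · intro i
    by_cases hi : i ∈ g <;> simp [hi, hLU2.1 i]
  · intro i j hij
    by_cases hi : i ∈ g
    · simp only [hi, if_pos]
      exact hLU2.2 i j hij
    · simp only [hi, if_neg, if_false]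
      rw [if_neg (Fin.ne_of_lt hij)]
  · intro i hi; simp [hi]
  · intro i j hij hcase
    rcases hcase with hi | hj
    · simp [hi, hij]
    · by_cases hi : i ∈ g
      · simp only [hi, if_pos]
        exact hz2 i hi j hj hij
      · simp [hi, hij]
  · refine (congrArg rmk (Finset.prod_congr rfl fun i hi => ?_)).trans heq2
    simp [subVar, hi]
end Work4
section Work5
variable {m : ℕ}

noncomputable def phi {m : ℕ} : MvPolynomial (Fin m) (ZMod 2) →ₗ[ZMod 2] (Finset (Fin m) →₀ ZMod 2) :=
  Finsupp.lmapDomain (ZMod 2) (ZMod 2) (fun α : Fin m →₀ ℕ => α.support) ∘ₗ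
    (AddMonoidAlgebra.coeffLinearEquiv (ZMod 2)).toLinearMap

lemma phi_monomial (μ : Fin m →₀ ℕ) (c : ZMod 2) :
    phi (monomial μ c) = Finsupp.single μ.support c :=
  Finsupp.mapDomain_single

lemma phi_apply (Q : MvPolynomial (Fin m) (ZMod 2)) (s : Finset (Fin m)) :
    phi Q s = ∑ β ∈ Q.support, if β.support = s then coeff β Q else 0 := by
  conv_lhs => rw [Q.as_sum, map_sum]
  rw [Finsupp.finset_sum_apply]
  exact Finset.sum_congr rfl fun β _ => by rw [phi_monomial, Finsupp.single_apply]

lemma phi_mul_gen (Q : MvPolynomial (Fin m) (ZMod 2)) (i : Fin m) :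
    phi (Q * (X i ^ 2 - X i)) = 0 := by
  induction Q using MvPolynomial.induction_on' with
  | monomial μ c =>
    have hX1 : (X i : MvPolynomial (Fin m) (ZMod 2)) = monomial (Finsupp.single i 1) 1 := by
      rw [← pow_one (X i : MvPolynomial (Fin m) (ZMod 2)), X_pow_eq_monomial]
    have h : (monomial μ c : MvPolynomial (Fin m) (ZMod 2)) * (X i ^ 2 - X i)
        = monomial (μ + Finsupp.single i 2) c - monomial (μ + Finsupp.single i 1) c := by
      rw [mul_sub, X_pow_eq_monomial, hX1, monomial_mul, monomial_mul, mul_one]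
    rw [h, map_sub, phi_monomial, phi_monomial, supp_add, supp_add,
      Finsupp.support_single_ne_zero i (by omega : (2:ℕ) ≠ 0),
      Finsupp.support_single_ne_zero i (by omega : (1:ℕ) ≠ 0), sub_self]
  | add p q hp hq => rw [add_mul, map_add, hp, hq, add_zero]

lemma phi_ideal {x : MvPolynomial (Fin m) (ZMod 2)} (hx : x ∈ Ig m) : phi x = 0 := by
  rw [Ig] at hx
  rw [Ideal.span] at hx
  obtain ⟨c, hsupp, rfl⟩ := Submodule.mem_span_set.mp hx
  rw [Finsupp.sum, map_sum]
  refine Finset.sum_eq_zero fun p hp => ?_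
  obtain ⟨i, rfl⟩ := hsupp hp
  rw [smul_eq_mul]
  exact phi_mul_gen _ i

lemma phi_congr {P Q : MvPolynomial (Fin m) (ZMod 2)} (h : rmk P = rmk Q) : phi P = phi Q := by
  have := phi_ideal (rmk_eq_iff.mp h)
  rwa [map_sub, sub_eq_zero] at this
end Work5
section Work6
variable {m : ℕ}

def Offg (g : Finset (Fin m)) (Q : MvPolynomial (Fin m) (ZMod 2)) : Prop :=
  ∀ α ∈ Q.support, ∀ k ∈ g, α k = 0

lemma offg_monomial {g : Finset (Fin m)} {μ : Fin m →₀ ℕ} {c : ZMod 2}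
    (hμ : ∀ k ∈ g, μ k = 0) : Offg g (monomial μ c) := by
  intro α hα k hk
  classical
  have := MvPolynomial.support_monomial (a := c) (s := μ) ▸ hα
  split at this
  · simp at this
  · rw [Finset.mem_singleton.mp this]; exact hμ k hk

lemma offg_add {g : Finset (Fin m)} {P Q : MvPolynomial (Fin m) (ZMod 2)}
    (hp : Offg g P) (hq : Offg g Q) : Offg g (P + Q) := by
  classical
  intro α hα k hk
  rcases Finset.mem_union.mp (MvPolynomial.support_add hα) with h | h
  · exact hp α h k hk
  · exact hq α h k hk

lemma offg_mul {g : Finset (Fin m)} {P Q : MvPolynomial (Fin m) (ZMod 2)}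
    (hp : Offg g P) (hq : Offg g Q) : Offg g (P * Q) := by
  classical
  intro α hα k hk
  have := MvPolynomial.support_mul P Q hα
  rw [Finset.mem_add] at this
  obtain ⟨β, hβ, γ, hγ, rfl⟩ := this
  rw [Finsupp.add_apply, hp β hβ k hk, hq γ hγ k hk]

lemma offg_sum {g : Finset (Fin m)} {ι : Type*} (t : Finset ι)
    (f : ι → MvPolynomial (Fin m) (ZMod 2)) (h : ∀ i ∈ t, Offg g (f i)) :
    Offg g (∑ i ∈ t, f i) := by
  classical
  induction t using Finset.induction_on with
  | empty => simpa using offg_monomial (g := g) (μ := 0) (c := 0) (fun k _ => rfl)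
  | insert _ _ hne ih =>
    rw [Finset.sum_insert hne]
    exact offg_add (h _ (Finset.mem_insert_self _ _))
      (ih fun i hi => h i (Finset.mem_insert_of_mem hi))

lemma offg_prod {g : Finset (Fin m)} {ι : Type*} (t : Finset ι)
    (f : ι → MvPolynomial (Fin m) (ZMod 2)) (h : ∀ i ∈ t, Offg g (f i)) :
    Offg g (∏ i ∈ t, f i) := by
  classical
  induction t using Finset.induction_on with
  | empty =>
    rw [Finset.prod_empty]
    have := offg_monomial (g := g) (μ := 0) (c := 1) (fun k _ => rfl)
    simpa using this
  | insert _ _ hne ih =>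
    rw [Finset.prod_insert hne]
    exact offg_mul (h _ (Finset.mem_insert_self _ _))
      (ih fun i hi => h i (Finset.mem_insert_of_mem hi))

-- the product of variables over S is a monomial
lemma prod_X_monomial (S : Finset (Fin m)) :
    (∏ i ∈ S, X i : MvPolynomial (Fin m) (ZMod 2))
      = monomial (∑ i ∈ S, Finsupp.single i 1) 1 := by
  classical
  induction S using Finset.induction_on with
  | empty => simp [monomial_zero']
  | insert _ _ hne ih =>
    rename_i a s
    rw [Finset.prod_insert hne, Finset.sum_insert hne, ih]
    have hX1 : (X a : MvPolynomial (Fin m) (ZMod 2)) = monomial (Finsupp.single a 1) 1 := by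
      rw [← pow_one (X a : MvPolynomial (Fin m) (ZMod 2)), X_pow_eq_monomial]
    rw [hX1, monomial_mul, mul_one]

lemma supp_sum_single (S : Finset (Fin m)) :
    (∑ i ∈ S, Finsupp.single i (1:ℕ)).support = S := by
  classical
  induction S using Finset.induction_on with
  | empty => simp
  | insert _ _ hne ih =>
    rename_i a s
    rw [Finset.sum_insert hne, supp_add, ih,
      Finsupp.support_single_ne_zero _ (by omega : (1:ℕ) ≠ 0)]
    ext k; simp [or_comm]
lemma phi_shift {g : Finset (Fin m)} (S : Finset (Fin m)) (hS : S ⊆ g)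
    (Q : MvPolynomial (Fin m) (ZMod 2)) (hQ : Offg g Q) (s : Finset (Fin m)) :
    phi ((∏ i ∈ S, X i) * Q) s = if s ∩ g = S then phi Q (s \ g) else 0 := by
  classical
  rw [prod_X_monomial]
  conv_lhs => rw [Q.as_sum, Finset.mul_sum]
  simp_rw [monomial_mul, one_mul]
  rw [map_sum, Finsupp.finset_sum_apply]
  have hterm : ∀ β ∈ Q.support,
      phi (monomial ((∑ i ∈ S, Finsupp.single i 1) + β) (coeff β Q)) s
      = if S ∪ β.support = s then coeff β Q else 0 := by
    intro β hβ
    rw [phi_monomial, supp_add, supp_sum_single, Finsupp.single_apply]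
  rw [Finset.sum_congr rfl hterm]
  by_cases h : s ∩ g = S
  · rw [if_pos h, phi_apply]
    refine Finset.sum_congr rfl fun β hβ => ?_
    have hd : ∀ k ∈ β.support, k ∉ g := fun k hk hkg =>
      absurd (hQ β hβ k hkg) (Finsupp.mem_support_iff.mp hk)
    have hiff : (S ∪ β.support = s) ↔ (β.support = s \ g) := by
      constructor
      · rintro rfl
        ext k
        simp only [Finset.mem_sdiff, Finset.mem_union]
        constructor
        · intro hk; exact ⟨Or.inr hk, hd k hk⟩
        · rintro ⟨hk | hk, hkg⟩
          · exact absurd (hS hk) hkg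
          · exact hk
      · intro hbs
        rw [hbs]
        ext k
        simp only [Finset.mem_union, Finset.mem_sdiff]
        constructor
        · rintro (hk | ⟨hk, _⟩)
          · exact (Finset.mem_inter.mp (h ▸ hk)).1
          · exact hk
        · intro hk
          by_cases hkg : k ∈ g
          · exact Or.inl (h ▸ Finset.mem_inter.mpr ⟨hk, hkg⟩)
          · exact Or.inr ⟨hk, hkg⟩
    exact if_congr hiff rfl rfl
  · rw [if_neg h]
    refine Finset.sum_eq_zero fun β hβ => ?_
    have hd : ∀ k ∈ β.support, k ∉ g := fun k hk hkg =>
      absurd (hQ β hβ k hkg) (Finsupp.mem_support_iff.mp hk)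
    rw [if_neg]
    rintro rfl
    apply h
    ext k
    simp only [Finset.mem_inter, Finset.mem_union]
    constructor
    · rintro ⟨hk | hk, hkg⟩
      · exact hk
      · exact absurd hkg (hd k hk)
    · intro hk
      exact ⟨Or.inl hk, hS hk⟩

lemma phi_prod_formula {g : Finset (Fin m)} (v : Fin m → MvPolynomial (Fin m) (ZMod 2))
    (hv : ∀ i ∈ g, Offg g (v i)) (s : Finset (Fin m)) :
    phi (∏ i ∈ g, (X i + v i)) s = phi (∏ i ∈ g \ (s ∩ g), v i) (s \ g) := by
  classical
  rw [Finset.prod_add, map_sum, Finsupp.finset_sum_apply]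
  have hterm : ∀ t ∈ g.powerset, phi ((∏ i ∈ t, X i) * ∏ i ∈ g \ t, v i) s
      = if s ∩ g = t then phi (∏ i ∈ g \ t, v i) (s \ g) else 0 := fun t ht =>
    phi_shift t (Finset.mem_powerset.mp ht) _
      (offg_prod _ _ fun i hi => hv i (Finset.mem_sdiff.mp hi).1) s
  rw [Finset.sum_congr rfl hterm, Finset.sum_ite_eq, if_pos
    (Finset.mem_powerset.mpr Finset.inter_subset_right)]
-- the "off-g" affine part of subVar
noncomputable def vpart (g : Finset (Fin m)) (A : Matrix (Fin m) (Fin m) (ZMod 2))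
    (b : Fin m → ZMod 2) (i : Fin m) : MvPolynomial (Fin m) (ZMod 2) :=
  (∑ j ∈ Finset.univ.filter (· ∉ g), C (A i j) * X j) + C (b i)

lemma C_mul_X_monomial (c : ZMod 2) (j : Fin m) :
    (C c * X j : MvPolynomial (Fin m) (ZMod 2)) = monomial (Finsupp.single j 1) c := by
  have hX1 : (X j : MvPolynomial (Fin m) (ZMod 2)) = monomial (Finsupp.single j 1) 1 := by
    rw [← pow_one (X j : MvPolynomial (Fin m) (ZMod 2)), X_pow_eq_monomial]
  rw [hX1, C_mul_monomial, mul_one]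

lemma offg_vpart (g : Finset (Fin m)) (A : Matrix (Fin m) (Fin m) (ZMod 2))
    (b : Fin m → ZMod 2) (i : Fin m) : Offg g (vpart g A b i) := by
  classical
  refine offg_add (offg_sum _ _ fun j hj => ?_) ?_
  · rw [C_mul_X_monomial]
    refine offg_monomial fun k hk => ?_
    have hj' : j ∉ g := (Finset.mem_filter.mp hj).2
    exact Finsupp.single_eq_of_ne fun h => hj' (h ▸ hk)
  · rw [C_apply]
    exact offg_monomial fun k _ => rfl

lemma subVar_decomp {g : Finset (Fin m)} {A : Matrix (Fin m) (Fin m) (ZMod 2)}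
    {b : Fin m → ZMod 2} (hLU : LowerUni A) (hst : stabCond g A b)
    {i : Fin m} (hi : i ∈ g) : subVar A b i = X i + vpart g A b i := by
  classical
  rw [subVar, vpart]
  have hsplit : (∑ j, C (A i j) * X j : MvPolynomial (Fin m) (ZMod 2))
      = (∑ j ∈ Finset.univ.filter (· ∉ g), C (A i j) * X j)
        + ∑ j ∈ Finset.univ.filter (fun j => ¬ j ∉ g), C (A i j) * X j :=
    (Finset.sum_filter_add_sum_filter_not _ _ _).symm
  have hsum : (∑ j ∈ Finset.univ.filter (fun j => ¬ j ∉ g), C (A i j) * X j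
      : MvPolynomial (Fin m) (ZMod 2)) = X i := by
    rw [Finset.sum_eq_single i]
    · rw [hLU.1 i, map_one, one_mul]
    · intro j hj hji
      rw [hst.2 i j (fun h => hji (h.symm)) (Or.inr (not_not.mp (Finset.mem_filter.mp hj).2)),
        map_zero, zero_mul]
    · intro hni
      exact absurd (Finset.mem_filter.mpr ⟨Finset.mem_univ i, not_not.mpr hi⟩) hni
  rw [hsplit, hsum]
  ring

lemma phi_vpart_single {g : Finset (Fin m)} (A : Matrix (Fin m) (Fin m) (ZMod 2))
    (b : Fin m → ZMod 2) (i : Fin m) {j : Fin m} (hj : j ∉ g) :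
    phi (vpart g A b i) {j} = A i j := by
  classical
  rw [vpart, map_add, Finsupp.add_apply, map_sum, Finsupp.finset_sum_apply]
  have hterm : ∀ j' ∈ Finset.univ.filter (· ∉ g),
      phi (C (A i j') * X j' : MvPolynomial (Fin m) (ZMod 2)) {j}
      = if j' = j then A i j' else 0 := by
    intro j' _
    rw [C_mul_X_monomial, phi_monomial,
      Finsupp.support_single_ne_zero _ (by omega : (1:ℕ) ≠ 0), Finsupp.single_apply]
    exact if_congr ⟨fun h => Finset.singleton_injective h, fun h => h ▸ rfl⟩ rfl rfl
  rw [Finset.sum_congr rfl hterm, Finset.sum_ite_eq' _ j, if_pos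
    (Finset.mem_filter.mpr ⟨Finset.mem_univ j, hj⟩)]
  have : phi (C (b i) : MvPolynomial (Fin m) (ZMod 2)) {j} = 0 := by
    rw [C_apply, phi_monomial, Finsupp.support_zero, Finsupp.single_apply,
      if_neg (Ne.symm (Finset.singleton_ne_empty j))]
  rw [this, add_zero]

lemma phi_vpart_empty {g : Finset (Fin m)} (A : Matrix (Fin m) (Fin m) (ZMod 2))
    (b : Fin m → ZMod 2) (i : Fin m) :
    phi (vpart g A b i) ∅ = b i := by
  classical
  rw [vpart, map_add, Finsupp.add_apply, map_sum, Finsupp.finset_sum_apply]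
  have hterm : ∀ j' ∈ Finset.univ.filter (· ∉ g),
      phi (C (A i j') * X j' : MvPolynomial (Fin m) (ZMod 2)) (∅ : Finset (Fin m)) = 0 := by
    intro j' _
    rw [C_mul_X_monomial, phi_monomial,
      Finsupp.support_single_ne_zero _ (by omega : (1:ℕ) ≠ 0), Finsupp.single_apply,
      if_neg (Finset.singleton_ne_empty j')]
  rw [Finset.sum_congr rfl hterm, Finset.sum_const_zero, zero_add, C_apply, phi_monomial,
    Finsupp.support_zero, Finsupp.single_apply, if_pos rfl]
lemma erase_inter {g : Finset (Fin m)} {i : Fin m} : (g.erase i) ∩ g = g.erase i :=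
  Finset.inter_eq_left.mpr (Finset.erase_subset i g)

lemma sdiff_erase_self {g : Finset (Fin m)} {i : Fin m} (hi : i ∈ g) :
    g \ (g.erase i) = {i} := by
  ext k
  simp only [Finset.mem_sdiff, Finset.mem_erase, Finset.mem_singleton, not_and]
  constructor
  · rintro ⟨hkg, hne⟩
    by_contra hki
    exact (hne hki) hkg
  · rintro rfl
    exact ⟨hi, fun h => absurd rfl h⟩

lemma phi_prod_A {g : Finset (Fin m)} {A : Matrix (Fin m) (Fin m) (ZMod 2)}
    {b : Fin m → ZMod 2} (hLU : LowerUni A) (hst : stabCond g A b)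
    {i : Fin m} (hi : i ∈ g) {j : Fin m} (hj : j ∉ g) :
    phi (∏ k ∈ g, subVar A b k) (insert j (g.erase i)) = A i j := by
  classical
  rw [Finset.prod_congr rfl fun k hk => subVar_decomp hLU hst hk,
    phi_prod_formula _ (fun k _ => offg_vpart g A b k) _]
  have h1 : (insert j (g.erase i)) ∩ g = g.erase i := by
    ext k
    simp only [Finset.mem_inter, Finset.mem_insert, Finset.mem_erase]
    constructor
    · rintro ⟨h | h, hg⟩
      · exact absurd (h ▸ hg) hj
      · exact h
    · intro h
      exact ⟨Or.inr h, h.2⟩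
  have h3 : insert j (g.erase i) \ g = {j} := by
    ext k
    simp only [Finset.mem_sdiff, Finset.mem_insert, Finset.mem_erase, Finset.mem_singleton]
    constructor
    · rintro ⟨h | h, hg⟩
      · exact h
      · exact absurd h.2 hg
    · rintro rfl
      exact ⟨Or.inl rfl, hj⟩
  rw [h1, h3, sdiff_erase_self hi, Finset.prod_singleton, phi_vpart_single A b i hj]

lemma phi_prod_b {g : Finset (Fin m)} {A : Matrix (Fin m) (Fin m) (ZMod 2)}
    {b : Fin m → ZMod 2} (hLU : LowerUni A) (hst : stabCond g A b)
    {i : Fin m} (hi : i ∈ g) :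
    phi (∏ k ∈ g, subVar A b k) (g.erase i) = b i := by
  classical
  rw [Finset.prod_congr rfl fun k hk => subVar_decomp hLU hst hk,
    phi_prod_formula _ (fun k _ => offg_vpart g A b k) _]
  rw [erase_inter, sdiff_erase_self hi,
    Finset.sdiff_eq_empty_iff_subset.mpr (Finset.erase_subset i g),
    Finset.prod_singleton, phi_vpart_empty]
theorem orbit_card_eq_stab_card' {m : ℕ} (g : Finset (Fin m)) :
    Set.BijOn
      (fun p : Matrix (Fin m) (Fin m) (ZMod 2) × (Fin m → ZMod 2) =>
        rmk (∏ i ∈ g, subVar p.1 p.2 i))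
      { p | LowerUni p.1 ∧ stabCond g p.1 p.2 }
      (orbitLTA g) ∧
    Nat.card (orbitLTA g) =
      Nat.card { p : Matrix (Fin m) (Fin m) (ZMod 2) × (Fin m → ZMod 2) |
        LowerUni p.1 ∧ stabCond g p.1 p.2 } := by
  have hbij : Set.BijOn
      (fun p : Matrix (Fin m) (Fin m) (ZMod 2) × (Fin m → ZMod 2) =>
        rmk (∏ i ∈ g, subVar p.1 p.2 i))
      { p | LowerUni p.1 ∧ stabCond g p.1 p.2 }
      (orbitLTA g) := by
    refine ⟨?_, ?_, ?_⟩
    · intro p hp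
      exact ⟨p.1, p.2, hp.1, rfl⟩
    · rintro ⟨A, b⟩ ⟨hLU, hst⟩ ⟨A', b'⟩ ⟨hLU', hst'⟩ heq
      replace hLU : LowerUni A := hLU
      replace hst : stabCond g A b := hst
      replace hLU' : LowerUni A' := hLU'
      replace hst' : stabCond g A' b' := hst'
      have hphi : phi (∏ k ∈ g, subVar A b k) = phi (∏ k ∈ g, subVar A' b' k) :=
        phi_congr heq
      have hA : A = A' := by
        ext i j
        by_cases hi : i ∈ g
        · by_cases hj : j ∈ g
          · by_cases hij : i = j
            · rw [hij, hLU.1, hLU'.1]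
            · rw [hst.2 i j hij (Or.inr hj), hst'.2 i j hij (Or.inr hj)]
          · rw [← phi_prod_A hLU hst hi hj, ← phi_prod_A hLU' hst' hi hj, hphi]
        · by_cases hij : i = j
          · rw [hij, hLU.1, hLU'.1]
          · rw [hst.2 i j hij (Or.inl hi), hst'.2 i j hij (Or.inl hi)]
      have hb : b = b' := by
        funext i
        by_cases hi : i ∈ g
        · rw [← phi_prod_b hLU hst hi, ← phi_prod_b hLU' hst' hi, hphi]
        · rw [hst.1 i hi, hst'.1 i hi]
      exact Prod.ext hA hb
    · rintro Q ⟨A, b, hLU, rfl⟩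
      obtain ⟨A', b', hLU', hst', heq'⟩ := surj_core g A b hLU
      exact ⟨(A', b'), ⟨hLU', hst'⟩, heq'⟩
  exact ⟨hbij, Nat.card_congr (Set.BijOn.equiv _ hbij).symm⟩
end Work6

/-- the map `(A,b) ↦ (A,b)·g` is a bijection from `LTA(m,2)_g`
onto the orbit of `g` under `LTA(m,2)`; hence `|LTA(m,2)·g| = |LTA(m,2)_g|`. -/
theorem orbit_card_eq_stab_card {m : ℕ} (g : Finset (Fin m)) :
    Set.BijOn
      (fun p : Matrix (Fin m) (Fin m) (ZMod 2) × (Fin m → ZMod 2) =>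
        rmk (∏ i ∈ g, subVar p.1 p.2 i))
      { p | LowerUni p.1 ∧ stabCond g p.1 p.2 }
      (orbitLTA g) ∧
    Nat.card (orbitLTA g) =
      Nat.card { p : Matrix (Fin m) (Fin m) (ZMod 2) × (Fin m → ZMod 2) |
        LowerUni p.1 ∧ stabCond g p.1 p.2 } := by
  exact orbit_card_eq_stab_card' g
end
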